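/- arXiv:2101.11777 — 2 statements merged into one kernel-verified Lean document; each statement's English description precedes it below -/
import Mathlib

section
/- Let T be a tree of order m and let T₁ be a subtree of T. If a graph G contains a subtree T₁' isomorphic to T₁, with isomorphism φ: T₁ → T₁', such that d_G(v) ≥ m − 1 for every vertex v ∈ V(G) \ {φ(x) : x ∈ V(T₁), N_T(x) ⊆ V(T₁)}, then G contains a subtree T' isomorphic to T such that T₁' is a subgraph of T'. -/
/-- In an acyclic graph, a vertex outside a "connected" set `S` has at most one
neighbor in `S`. -/
lemma unique_nbr_aux {W : Type*} {T : SimpleGraph W} (hT : T.IsAcyclic)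
    {S : Set W} (hconn : ∀ a ∈ S, ∀ b ∈ S, ∃ p : T.Walk a b, ∀ c ∈ p.support, c ∈ S)
    {y x₁ x₂ : W} (hy : y ∉ S) (h1 : x₁ ∈ S) (h2 : x₂ ∈ S)
    (a1 : T.Adj y x₁) (a2 : T.Adj y x₂) : x₁ = x₂ := by
  classical
  by_contra hne
  obtain ⟨p, hp⟩ := hconn x₁ h1 x₂ h2
  have hq2 : (SimpleGraph.Walk.cons a1.symm
      (SimpleGraph.Walk.cons a2 SimpleGraph.Walk.nil)).IsPath := by
    rw [SimpleGraph.Walk.isPath_def]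
    simp only [SimpleGraph.Walk.support_cons, SimpleGraph.Walk.support_nil]
    have hx1y : x₁ ≠ y := fun h => hy (h ▸ h1)
    have hyx2 : y ≠ x₂ := fun h => hy (h ▸ h2)
    simp [List.nodup_cons, hx1y, hne, hyx2]
  have huniq := hT.path_unique p.toPath ⟨_, hq2⟩
  have hy1 : y ∈ (p.toPath : T.Walk x₁ x₂).support := by
    rw [huniq]
    simp
  exact hy (hp _ (p.support_toPath_subset hy1))

/-- Let `T` be a tree of order `m` and `T₁` a subtree of `T`. If a graph `G` contains a subtree
`T₁' ≅ T₁` via an isomorphism `φ` such that every vertex of `G` outside the set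
`{φ(x) : x ∈ V(T₁), N_T(x) ⊆ V(T₁)}` has degree at least `m - 1` in `G`, then `G` contains a
subtree `T' ≅ T` with `T₁' ⊆ T'`. -/
theorem stmt_5 {V W : Type*} [Fintype V] [Fintype W] (m : ℕ)
    (T : SimpleGraph W) (hT : T.IsTree) (hm : Fintype.card W = m)
    (T₁ : T.Subgraph) (hT₁ : T₁.coe.IsTree)
    (G : SimpleGraph V) [DecidableRel G.Adj]
    (T₁' : G.Subgraph) (φ : T₁.coe ≃g T₁'.coe)
    (hdeg : ∀ v : V,
      (¬ ∃ x : T₁.verts, T.neighborSet (x : W) ⊆ T₁.verts ∧ ((φ x : V) = v)) →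
      m - 1 ≤ G.degree v) :
    ∃ T' : G.Subgraph, T₁' ≤ T' ∧ Nonempty (T'.coe ≃g T) := by
  classical
  have hW : Nonempty ↥T₁.verts := hT₁.isConnected.nonempty
  obtain ⟨x₀⟩ := hW
  -- initial data
  set S₀ : Finset W := (Set.toFinite T₁.verts).toFinset with hS₀
  have hS₀mem : ∀ x : W, x ∈ S₀ ↔ x ∈ T₁.verts := fun x => Set.Finite.mem_toFinset _
  set f₀ : W → V := fun x => if h : x ∈ T₁.verts then (φ ⟨x, h⟩ : V) else (φ x₀ : V) with hf₀
  have hf₀eq : ∀ (x : W) (h : x ∈ T₁.verts), f₀ x = (φ ⟨x, h⟩ : V) := by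
    intro x h; simp [hf₀, h]
  -- key facts about T₁
  have hsubadj : ∀ {a b : W}, a ∈ T₁.verts → b ∈ T₁.verts → T.Adj a b → T₁.Adj a b := by
    intro a b ha hb hab
    obtain ⟨q⟩ := hT₁.isConnected.preconnected ⟨a, ha⟩ ⟨b, hb⟩
    obtain ⟨q', hq⟩ := q.toPath
    have hm' : (q'.map T₁.hom).IsPath :=
      q'.map_isPath_of_injective SimpleGraph.Subgraph.hom_injective hq
    have huniq := hT.IsAcyclic.path_unique ⟨_, hm'⟩ (SimpleGraph.Path.singleton hab)
    have hsupp : (q'.map T₁.hom).support = [a, b] := by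
      have : ((⟨_, hm'⟩ : T.Path a b) : T.Walk a b).support
          = ((SimpleGraph.Path.singleton hab : T.Walk a b)).support :=
          congrArg (fun p : T.Path a b => (p : T.Walk a b).support) huniq
      simpa [SimpleGraph.Path.singleton] using this
    cases q' with
    | nil => exact absurd rfl hab.ne
    | @cons _ c _ h q'' =>
      rw [SimpleGraph.Walk.map_cons, SimpleGraph.Walk.support_cons] at hsupp
      have h2 : (q''.map T₁.hom).support = [b] := by injection hsupp
      have h3 := (q''.map T₁.hom).support_eq_cons
      rw [h2] at h3
      have hcb : T₁.hom c = b := by injection h3.symm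
      have h4 : T₁.Adj a (c : W) := h
      have hcb' : (c : W) = b := hcb
      rwa [hcb'] at h4
  have hT₁verts_conn : ∀ a ∈ T₁.verts, ∀ b ∈ T₁.verts,
      ∃ p : T.Walk a b, ∀ c ∈ p.support, c ∈ T₁.verts := by
    intro a ha b hb
    obtain ⟨q⟩ := hT₁.isConnected.preconnected ⟨a, ha⟩ ⟨b, hb⟩
    refine ⟨q.map T₁.hom, ?_⟩
    intro c hc
    replace hc : c ∈ q.support.map T₁.hom := by rw [← SimpleGraph.Walk.support_map]; exact hc
    obtain ⟨⟨c', hc'⟩, _, rfl⟩ := List.mem_map.mp hc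
    exact hc'
  -- main induction: extend a partial embedding
  have key : ∀ (k : ℕ) (S : Finset W) (f : W → V),
      (Finset.univ \ S).card ≤ k →
      T₁.verts ⊆ ↑S →
      (∀ (x : W) (h : x ∈ T₁.verts), f x = (φ ⟨x, h⟩ : V)) →
      Set.InjOn f ↑S →
      (∀ a ∈ S, ∀ b ∈ S, T.Adj a b → G.Adj (f a) (f b)) →
      (∀ a ∈ (↑S : Set W), ∀ b ∈ (↑S : Set W),
        ∃ p : T.Walk a b, ∀ c ∈ p.support, c ∈ (↑S : Set W)) →
      ∃ g : W → V, Function.Injective g ∧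
        (∀ x y : W, T.Adj x y → G.Adj (g x) (g y)) ∧
        (∀ (x : W) (h : x ∈ T₁.verts), g x = (φ ⟨x, h⟩ : V)) := by
    intro k
    induction k with
    | zero =>
      intro S f hcard hsub hphi hinj hedge _
      have hS : S = Finset.univ := by
        have h0 : Finset.univ \ S = ∅ := Finset.card_eq_zero.mp (Nat.le_zero.mp hcard)
        exact Finset.univ_subset_iff.mp (Finset.sdiff_eq_empty_iff_subset.mp h0)
      subst hS
      refine ⟨f, ?_, ?_, hphi⟩
      · intro a b hab
        exact hinj (by simp) (by simp) hab
      · intro x y hxy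
        exact hedge x (Finset.mem_univ x) y (Finset.mem_univ y) hxy
    | succ k ih =>
      intro S f hcard hsub hphi hinj hedge hconn
      by_cases hle : (Finset.univ \ S).card ≤ k
      · exact ih S f hle hsub hphi hinj hedge hconn
      -- S ≠ univ: pick u ∉ S
      have hcard' : (Finset.univ \ S).card = k + 1 := le_antisymm hcard (Nat.lt_of_not_le hle)
      obtain ⟨u, hu⟩ := Finset.card_pos.mp (by omega : 0 < (Finset.univ \ S).card)
      have huS : u ∉ S := (Finset.mem_sdiff.mp hu).2
      have hx₀S : (x₀ : W) ∈ S := hsub x₀.2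
      -- find boundary edge x ∈ S, y ∉ S
      obtain ⟨p⟩ := hT.isConnected.preconnected (x₀ : W) u
      obtain ⟨d, _, hdS, hdnS⟩ := p.exists_boundary_dart (↑S : Set W)
        (by simpa using hx₀S) (by simpa using huS)
      obtain ⟨⟨x, y⟩, hxy⟩ := d
      have hxS : x ∈ S := by simpa using hdS
      have hyS : y ∉ S := by simpa using hdnS
      have hyT₁ : y ∉ T₁.verts := fun h => hyS (hsub h)
      -- degree bound applies at f x
      have hfx : m - 1 ≤ G.degree (f x) := by
        apply hdeg
        rintro ⟨⟨z, hz⟩, hzN, hzφ⟩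
        have hfz : f z = f x := by rw [hphi z hz]; exact hzφ
        have : z = x := hinj (hsub hz) hxS hfz
        subst this
        exact hyS (hsub (hzN hxy))
      -- find a fresh neighbor w of f x
      have hSm : S.card < m := by
        rw [← hm, ← Finset.card_univ]
        exact Finset.card_lt_card (Finset.ssubset_univ_iff.mpr
          (fun h => huS (h ▸ Finset.mem_univ u)))
      have hS1 : 1 ≤ S.card := Finset.card_pos.mpr ⟨x, hxS⟩
      have hfresh : ∃ w, G.Adj (f x) w ∧ w ∉ S.image f := by
        have hne : (G.neighborFinset (f x) \ (S.image f).erase (f x)).Nonempty := by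
          rw [Finset.sdiff_nonempty]
          intro hsubn
          have h1 : G.degree (f x) ≤ ((S.image f).erase (f x)).card := by
            rw [← SimpleGraph.card_neighborFinset_eq_degree]
            exact Finset.card_le_card hsubn
          have h2 : ((S.image f).erase (f x)).card ≤ S.card - 1 := by
            calc ((S.image f).erase (f x)).card ≤ (S.image f).card - 1 :=
                  by
                    have := Finset.card_erase_of_mem
                      (Finset.mem_image_of_mem f hxS)
                    omega
              _ ≤ S.card - 1 := by
                  have := Finset.card_image_le (s := S) (f := f)
                  omega
          omega
        obtain ⟨w, hw⟩ := hne
        rw [Finset.mem_sdiff, SimpleGraph.mem_neighborFinset] at hw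
        refine ⟨w, hw.1, fun hwS => hw.2 (Finset.mem_erase.mpr ⟨hw.1.ne', hwS⟩)⟩
      obtain ⟨w, hwadj, hwS⟩ := hfresh
      -- extend f to y
      set f' : W → V := Function.update f y w with hf'
      have hf'y : f' y = w := Function.update_self y w f
      have hf'S : ∀ a ∈ S, f' a = f a := fun a ha =>
        Function.update_of_ne (by rintro rfl; exact hyS ha) w f
      -- unique neighbor of y in S
      have hnbr : ∀ b ∈ S, T.Adj y b → b = x := fun b hb hyb =>
        unique_nbr_aux hT.IsAcyclic hconn (by simpa using hyS) hb
          (by simpa using hxS) hyb hxy.symm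
      -- verify invariants and apply ih
      have hsub' : T₁.verts ⊆ ↑(insert y S) := fun z hz =>
        Finset.mem_coe.mpr (Finset.mem_insert_of_mem (hsub hz))
      have hcard'' : (Finset.univ \ insert y S).card ≤ k := by
        have hymem : y ∈ Finset.univ \ S :=
          Finset.mem_sdiff.mpr ⟨Finset.mem_univ y, hyS⟩
        have : Finset.univ \ insert y S = (Finset.univ \ S).erase y := by
          ext z
          simp only [Finset.mem_sdiff, Finset.mem_insert, Finset.mem_erase,
            Finset.mem_univ, true_and]
          tauto
        rw [this, Finset.card_erase_of_mem hymem, hcard']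
        omega
      have hphi' : ∀ (z : W) (h : z ∈ T₁.verts), f' z = (φ ⟨z, h⟩ : V) := by
        intro z hz
        rw [hf'S z (hsub hz)]
        exact hphi z hz
      have hinj' : Set.InjOn f' ↑(insert y S) := by
        intro a ha b hb hab
        simp only [Finset.coe_insert, Set.mem_insert_iff, Finset.mem_coe] at ha hb
        rcases ha with rfl | ha <;> rcases hb with rfl | hb
        · rfl
        · rw [hf'y, hf'S b hb] at hab
          exact absurd (Finset.mem_image_of_mem f hb) (hab ▸ hwS)
        · rw [hf'y, hf'S a ha] at hab
          exact absurd (Finset.mem_image_of_mem f ha) (hab.symm ▸ hwS)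
        · rw [hf'S a ha, hf'S b hb] at hab
          exact hinj (Finset.mem_coe.mpr ha) (Finset.mem_coe.mpr hb) hab
      have hedge' : ∀ a ∈ insert y S, ∀ b ∈ insert y S,
          T.Adj a b → G.Adj (f' a) (f' b) := by
        intro a ha b hb hab
        have hmem : ∀ c, c ∈ insert y S → c ≠ y → c ∈ S := fun c hc hcy =>
          (Finset.mem_insert.mp hc).resolve_left hcy
        by_cases hay : a = y <;> by_cases hby : b = y
        · rw [hay, hby] at hab; exact absurd rfl hab.ne
        · have hbS := hmem b hb hby
          subst hay
          have hbx : b = x := hnbr b hbS hab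
          subst hbx
          rw [hf'y, hf'S b hbS]
          exact hwadj.symm
        · have haS := hmem a ha hay
          subst hby
          have hax : a = x := hnbr a haS hab.symm
          subst hax
          rw [hf'y, hf'S a haS]
          exact hwadj
        · have haS := hmem a ha hay
          have hbS := hmem b hb hby
          rw [hf'S a haS, hf'S b hbS]
          exact hedge a haS b hbS hab
      have hconn' : ∀ a ∈ (↑(insert y S) : Set W), ∀ b ∈ (↑(insert y S) : Set W),
          ∃ p : T.Walk a b, ∀ c ∈ p.support, c ∈ (↑(insert y S) : Set W) := by
        intro a ha b hb
        simp only [Finset.coe_insert, Set.mem_insert_iff, Finset.mem_coe] at ha hb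
        have hext : ∀ c, c ∈ (↑S : Set W) → c ∈ (↑(insert y S) : Set W) := by
          intro c hc
          simp only [Finset.coe_insert, Set.mem_insert_iff]
          exact Or.inr hc
        rcases ha with rfl | ha <;> rcases hb with rfl | hb
        · exact ⟨SimpleGraph.Walk.nil, by simp⟩
        · obtain ⟨p, hp⟩ := hconn x (Finset.mem_coe.mpr hxS) b (Finset.mem_coe.mpr hb)
          refine ⟨SimpleGraph.Walk.cons hxy.symm p, ?_⟩
          intro c hc
          rw [SimpleGraph.Walk.support_cons, List.mem_cons] at hc
          rcases hc with rfl | h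
          · simp
          · exact hext c (hp c h)
        · obtain ⟨p, hp⟩ := hconn a (Finset.mem_coe.mpr ha) x (Finset.mem_coe.mpr hxS)
          refine ⟨p.concat hxy, ?_⟩
          intro c hc
          rw [SimpleGraph.Walk.support_concat] at hc
          rw [List.mem_append, List.mem_singleton] at hc
          rcases hc with h | h
          · exact hext c (hp c h)
          · simp [h]
        · obtain ⟨p, hp⟩ := hconn a (Finset.mem_coe.mpr ha) b (Finset.mem_coe.mpr hb)
          exact ⟨p, fun c hc => hext c (hp c hc)⟩
      exact ih (insert y S) f' hcard'' hsub' hphi' hinj' hedge' hconn'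
  -- apply the induction to the initial data
  have hS₀coe : (↑S₀ : Set W) = T₁.verts := Set.Finite.coe_toFinset _
  obtain ⟨g, hginj, hgedge, hgphi⟩ := key (Finset.univ \ S₀).card S₀ f₀ le_rfl
    (by rw [hS₀coe])
    hf₀eq
    (by
      rw [hS₀coe]
      intro a ha b hb hab
      rw [hf₀eq a ha, hf₀eq b hb] at hab
      have : (⟨a, ha⟩ : ↥T₁.verts) = ⟨b, hb⟩ := φ.injective (Subtype.ext hab)
      exact congrArg Subtype.val this)
    (by
      intro a ha b hb hab
      rw [hS₀mem] at ha hb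
      have h₁ : T₁.Adj a b := hsubadj ha hb hab
      have h₂ : T₁.coe.Adj ⟨a, ha⟩ ⟨b, hb⟩ := h₁
      have h₃ : T₁'.coe.Adj (φ ⟨a, ha⟩) (φ ⟨b, hb⟩) := φ.map_adj_iff.mpr h₂
      rw [hf₀eq a ha, hf₀eq b hb]
      exact T₁'.adj_sub h₃)
    (by rw [hS₀coe]; exact hT₁verts_conn)
  -- build the subtree T'
  refine ⟨{ verts := Set.range g
            Adj := fun a b => ∃ x y : W, T.Adj x y ∧ g x = a ∧ g y = b
            adj_sub := by rintro a b ⟨x, y, hxy, rfl, rfl⟩; exact hgedge x y hxy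
            edge_vert := by rintro a b ⟨x, y, hxy, rfl, rfl⟩; exact ⟨x, rfl⟩
            symm := ⟨by rintro a b ⟨x, y, hxy, rfl, rfl⟩; exact ⟨y, x, hxy.symm, rfl, rfl⟩⟩ },
         ⟨?_, ?_⟩, ⟨?_⟩⟩
  · -- T₁'.verts ⊆ range g
    intro a ha
    refine ⟨(φ.symm ⟨a, ha⟩ : W), ?_⟩
    rw [hgphi _ (φ.symm ⟨a, ha⟩).2]
    simp
  · -- T₁'.Adj → ...
    intro a b hab
    have ha : a ∈ T₁'.verts := hab.fst_mem
    have hb : b ∈ T₁'.verts := hab.snd_mem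
    have h₂ : T₁'.coe.Adj ⟨a, ha⟩ ⟨b, hb⟩ := hab
    have h₃ : T₁.coe.Adj (φ.symm ⟨a, ha⟩) (φ.symm ⟨b, hb⟩) := φ.symm.map_adj_iff.mpr h₂
    refine ⟨(φ.symm ⟨a, ha⟩ : W), (φ.symm ⟨b, hb⟩ : W), T₁.adj_sub h₃, ?_, ?_⟩
    · rw [hgphi _ (φ.symm ⟨a, ha⟩).2]; simp
    · rw [hgphi _ (φ.symm ⟨b, hb⟩).2]; simp
  · -- the isomorphism
    refine ⟨(Equiv.ofInjective g hginj).symm, ?_⟩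
    intro a b
    constructor
    · rintro h
      refine ⟨(Equiv.ofInjective g hginj).symm a, (Equiv.ofInjective g hginj).symm b,
        h, ?_, ?_⟩
      · exact Equiv.apply_ofInjective_symm hginj a
      · exact Equiv.apply_ofInjective_symm hginj b
    · rintro ⟨x, y, hxy, hx, hy⟩
      have hxa : (Equiv.ofInjective g hginj).symm a = x := by
        apply hginj
        rw [Equiv.apply_ofInjective_symm hginj a, hx]
      have hyb : (Equiv.ofInjective g hginj).symm b = y := by
        apply hginj
        rw [Equiv.apply_ofInjective_symm hginj b, hy]
      rw [hxa, hyb]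
      exact hxy
end

section
/- Let T be a tree of order m and T' a subtree of T. Let L₁ ⊆ Leaf(T) \ V(T'), L₂ ⊆ Leaf(T − L₁) \ V(T') and L₃ = V(T) \ (V(T') ∪ L₁ ∪ L₂). Suppose a graph G contains a subgraph H' isomorphic to T', with isomorphism φ: T' → H', and V(G) \ V(H') has a partition (X₁, X₂, X₃); set X₄ = {φ(v) : v ∈ V(T'), N_T(v) ⊄ V(T')}. If (a) d_G(x) ≥ m − 1 for each x ∈ X₂ ∪ X₃ ∪ X₄, and (b) |N_G(x) \ X₁| ≥ m − 1 − |L₁| and |N_G(x) \ (X₁ ∪ X₂)| ≥ m − 1 − |L₁| − |L₂| for each x ∈ X₃ ∪ X₄, then G contains a subtree H isomorphic to T such that H' is a subgraph of H. -/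
namespace Stmt8Aux

open SimpleGraph Walk

variable {W : Type*} (T : SimpleGraph W) (hT : T.IsTree) (r : W)

noncomputable def tpath (x : W) : T.Walk x r := (hT.existsUnique_path x r).choose

lemma tpath_isPath (x : W) : (tpath T hT r x).IsPath :=
  (hT.existsUnique_path x r).choose_spec.1

lemma tpath_unique {x : W} (q : T.Walk x r) (hq : q.IsPath) : q = tpath T hT r x :=
  (hT.existsUnique_path x r).choose_spec.2 q hq

noncomputable def prnt (x : W) : W := (tpath T hT r x).getVert 1

noncomputable def rnk (x : W) : ℕ := (tpath T hT r x).length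

lemma tpath_decomp {x : W} (hx : x ≠ r) :
    ∃ (h : T.Adj x (prnt T hT r x)),
      tpath T hT r x = Walk.cons h (tpath T hT r (prnt T hT r x)) := by
  have hnil : ¬ (tpath T hT r x).Nil := by
    rw [nil_iff_length_eq]
    intro h
    exact hx (Walk.eq_of_length_eq_zero h)
  obtain ⟨u, h, q, hq⟩ := Walk.not_nil_iff.mp hnil
  have hu : prnt T hT r x = u := by
    rw [prnt, hq, Walk.getVert_cons_succ, Walk.getVert_zero]
  subst hu
  have hqp : q.IsPath := by
    have := tpath_isPath T hT r x
    rw [hq] at this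
    exact this.of_cons
  have : q = tpath T hT r (prnt T hT r x) := tpath_unique T hT r q hqp
  exact ⟨h, by rw [hq, this]⟩

lemma adj_prnt {x : W} (hx : x ≠ r) : T.Adj x (prnt T hT r x) :=
  (tpath_decomp T hT r hx).choose

lemma rnk_prnt {x : W} (hx : x ≠ r) :
    rnk T hT r x = rnk T hT r (prnt T hT r x) + 1 := by
  obtain ⟨h, hdec⟩ := tpath_decomp T hT r hx
  rw [rnk, rnk, hdec, Walk.length_cons]

lemma child [DecidableEq W] {x y : W} (hx : x ≠ r) (hadj : T.Adj x y) (hy : y ≠ prnt T hT r x) :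
    y ≠ r ∧ prnt T hT r y = x ∧ rnk T hT r y = rnk T hT r x + 1 := by
  have hysupp : y ∉ (tpath T hT r x).support := by
    intro hmem
    have hedge : (Walk.cons hadj Walk.nil).IsPath := by simp [hadj.ne]
    have ht := (tpath_isPath T hT r x).takeUntil hmem
    have he : (tpath T hT r x).takeUntil y hmem = Walk.cons hadj Walk.nil :=
      (hT.existsUnique_path x y).unique ht hedge
    have hspec := (tpath T hT r x).take_spec hmem
    rw [he] at hspec
    apply hy
    rw [prnt, ← hspec, Walk.cons_append, Walk.getVert_cons_succ, Walk.getVert_zero]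
  have hw : (Walk.cons hadj.symm (tpath T hT r x)).IsPath :=
    (tpath_isPath T hT r x).cons hysupp
  have hyr : y ≠ r := by
    rintro rfl
    have := Walk.isPath_iff_eq_nil.mp hw
    have hlen := congrArg Walk.length this
    simp at hlen
  have heq : Walk.cons hadj.symm (tpath T hT r x) = tpath T hT r y :=
    tpath_unique T hT r _ hw
  refine ⟨hyr, ?_, ?_⟩
  · rw [prnt, ← heq, Walk.getVert_cons_succ, Walk.getVert_zero]
  · rw [rnk, rnk, ← heq, Walk.length_cons]

lemma rnk_lt_card [Fintype W] (x : W) : rnk T hT r x + 1 ≤ Fintype.card W :=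
  (tpath_isPath T hT r x).length_lt

lemma tpath_support_subset [DecidableEq W] (T' : T.Subgraph) (hc : T'.coe.Connected)
    (hr : r ∈ T'.verts) {y : W} (hy : y ∈ T'.verts) :
    ∀ z ∈ (tpath T hT r y).support, z ∈ T'.verts := by
  obtain ⟨w0⟩ := hc.preconnected ⟨y, hy⟩ ⟨r, hr⟩
  have hyy : T'.hom ⟨y, hy⟩ = y := rfl
  have hrr : T'.hom ⟨r, hr⟩ = r := rfl
  set w1 : T.Walk y r := (w0.map T'.hom).copy hyy hrr with hw1
  have hsub : ∀ z ∈ w1.support, z ∈ T'.verts := by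
    rw [hw1, Walk.support_copy]
    intro z hz
    rw [Walk.support_map] at hz
    obtain ⟨⟨z', hz'⟩, _, rfl⟩ := List.mem_map.mp hz
    exact hz'
  have heq : (w1.toPath : T.Walk y r) = tpath T hT r y :=
    tpath_unique T hT r _ w1.toPath.2
  intro z hz
  rw [← heq] at hz
  exact hsub z (Walk.support_toPath_subset _ hz)

lemma prnt_mem_T' [DecidableEq W] (T' : T.Subgraph) (hc : T'.coe.Connected)
    (hr : r ∈ T'.verts) {y : W} (hy : y ∈ T'.verts) (hyr : y ≠ r) :
    prnt T hT r y ∈ T'.verts := by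
  obtain ⟨h, hdec⟩ := tpath_decomp T hT r hyr
  apply tpath_support_subset T hT r T' hc hr hy
  rw [hdec, Walk.support_cons]
  exact List.mem_cons_of_mem _ (Walk.start_mem_support _)

include hT in
lemma adj_in_T' [DecidableEq W] (T' : T.Subgraph) (hc : T'.coe.Connected)
    {a b : W} (ha : a ∈ T'.verts) (hb : b ∈ T'.verts) (hab : T.Adj a b) :
    T'.Adj a b := by
  obtain ⟨w0⟩ := hc.preconnected ⟨a, ha⟩ ⟨b, hb⟩
  set pc := w0.toPath with hpc
  have haa : T'.hom ⟨a, ha⟩ = a := rfl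
  have hbb : T'.hom ⟨b, hb⟩ = b := rfl
  set wm : T.Walk a b := (pc.val.map T'.hom).copy haa hbb with hwm
  have hmapP : wm.IsPath := by
    rw [hwm, Walk.isPath_copy]
    exact Walk.map_isPath_of_injective (fun u v huv => Subtype.ext_iff.mpr huv) pc.2
  have hedge : (Walk.cons hab Walk.nil).IsPath := by simp [hab.ne]
  have heq : wm = Walk.cons hab Walk.nil :=
    (hT.existsUnique_path a b).unique hmapP hedge
  have hlen : pc.val.length = 1 := by
    have := congrArg Walk.length heq
    rwa [hwm, Walk.length_copy, Walk.length_map, Walk.length_cons, Walk.length_nil] at this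
  have hadj' := Walk.adj_getVert_succ pc.val (i := 0) (by omega)
  rw [Walk.getVert_zero] at hadj'
  have h1 : pc.val.getVert 1 = ⟨b, hb⟩ := by
    rw [← hlen, Walk.getVert_length]
  rw [h1] at hadj'
  exact hadj'

end Stmt8Aux


namespace Stmt8Aux

variable {W : Type*}

noncomputable def stg (L₁ L₂ : Set W) (x : W) : ℕ :=
  haveI := Classical.dec (x ∈ L₁)
  haveI := Classical.dec (x ∈ L₂)
  if x ∈ L₁ then 2 else if x ∈ L₂ then 1 else 0

lemma stg_of_L₁ {L₁ L₂ : Set W} {x : W} (h : x ∈ L₁) : stg L₁ L₂ x = 2 := by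
  unfold stg; split_ifs <;> simp_all

lemma stg_of_L₂ {L₁ L₂ : Set W} {x : W} (h1 : x ∉ L₁) (h2 : x ∈ L₂) : stg L₁ L₂ x = 1 := by
  unfold stg; split_ifs <;> simp_all

lemma stg_of_M {L₁ L₂ : Set W} {x : W} (h1 : x ∉ L₁) (h2 : x ∉ L₂) : stg L₁ L₂ x = 0 := by
  unfold stg; split_ifs <;> simp_all

lemma stg_le (L₁ L₂ : Set W) (x : W) : stg L₁ L₂ x ≤ 2 := by
  unfold stg; split_ifs <;> omega

end Stmt8Aux


/-- Let `T` be a tree of order `m` and `T'` a subtree of `T`. Let `L₁ ⊆ Leaf(T) \ V(T')`,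
`L₂ ⊆ Leaf(T - L₁) \ V(T')` (and `L₃` the rest of `V(T)`, which plays no role in the
hypotheses). Suppose `G` contains a subgraph `H' ≅ T'` via `φ`, and `(X₁, X₂, X₃)` is a
partition of `V(G) \ V(H')`; let `X₄ = {φ(v) : v ∈ V(T'), N_T(v) ⊄ V(T')}`.
If (a) `d_G(x) ≥ m - 1` for each `x ∈ X₂ ∪ X₃ ∪ X₄`, and
(b) `|N_G(x) \ X₁| ≥ m - 1 - |L₁|` and `|N_G(x) \ (X₁ ∪ X₂)| ≥ m - 1 - |L₁| - |L₂|` for each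
`x ∈ X₃ ∪ X₄`, then `G` contains a subtree `H ≅ T` with `H' ⊆ H`. -/
theorem stmt_8 {V W : Type*} [Fintype V] [Fintype W] (m : ℕ)
    (T : SimpleGraph W) (hT : T.IsTree) (hm : Fintype.card W = m)
    (T' : T.Subgraph) (hT' : T'.coe.IsTree)
    (L₁ L₂ : Set W)
    (hL₁ : ∀ x ∈ L₁, x ∉ T'.verts ∧ (T.neighborSet x).Subsingleton)
    (hL₂ : ∀ x ∈ L₂, x ∉ T'.verts ∧ x ∉ L₁ ∧
      Set.Subsingleton {y | y ∉ L₁ ∧ T.Adj x y})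
    (G : SimpleGraph V) [DecidableRel G.Adj]
    (H' : G.Subgraph) (φ : T'.coe ≃g H'.coe)
    (X₁ X₂ X₃ : Set V)
    (h12 : Disjoint X₁ X₂) (h13 : Disjoint X₁ X₃) (h23 : Disjoint X₂ X₃)
    (hXunion : X₁ ∪ X₂ ∪ X₃ = (H'.verts)ᶜ)
    (X₄ : Set V)
    (hX₄ : X₄ = {v | ∃ x : T'.verts, ¬ T.neighborSet (x : W) ⊆ T'.verts ∧ (φ x : V) = v})
    (ha : ∀ x ∈ X₂ ∪ X₃ ∪ X₄, m - 1 ≤ G.degree x)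
    (hb₁ : ∀ x ∈ X₃ ∪ X₄, m - 1 - L₁.ncard ≤ (G.neighborSet x \ X₁).ncard)
    (hb₂ : ∀ x ∈ X₃ ∪ X₄,
      m - 1 - L₁.ncard - L₂.ncard ≤ (G.neighborSet x \ (X₁ ∪ X₂)).ncard) :
    ∃ H : G.Subgraph, H' ≤ H ∧ Nonempty (H.coe ≃g T) := by
  classical
  obtain ⟨⟨r, hr⟩⟩ := hT'.isConnected.nonempty
  have hT'conn : T'.coe.Connected := hT'.isConnected
  -- abbreviations for the aux machinery
  set pr : W → W := Stmt8Aux.prnt T hT r with hprdef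
  set rk : W → ℕ := Stmt8Aux.rnk T hT r with hrkdef
  set key : W → ℕ := fun x => Stmt8Aux.stg L₁ L₂ x * m + rk x with hkeydef
  have hm1 : 1 ≤ m := by
    have : Nonempty W := hT.isConnected.nonempty
    have := Fintype.card_pos (α := W)
    omega
  have hadjpr : ∀ x : W, x ≠ r → T.Adj x (pr x) := fun x hx => Stmt8Aux.adj_prnt T hT r hx
  have hrkpr : ∀ x : W, x ≠ r → rk x = rk (pr x) + 1 := fun x hx => Stmt8Aux.rnk_prnt T hT r hx
  have hchild : ∀ x y : W, x ≠ r → T.Adj x y → y ≠ pr x →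
      y ≠ r ∧ pr y = x ∧ rk y = rk x + 1 := fun x y hx hadj hy =>
    Stmt8Aux.child T hT r hx hadj hy
  have hrkm : ∀ x : W, rk x + 1 ≤ m := fun x => hm ▸ Stmt8Aux.rnk_lt_card T hT r x
  have hprT' : ∀ y : W, y ∈ T'.verts → y ≠ r → pr y ∈ T'.verts := fun y hy hyr =>
    Stmt8Aux.prnt_mem_T' T hT r T' hT'conn hr hy hyr
  have hadjT' : ∀ a b : W, a ∈ T'.verts → b ∈ T'.verts → T.Adj a b → T'.Adj a b :=
    fun a b ha hb hab => Stmt8Aux.adj_in_T' T hT T' hT'conn ha hb hab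
  have hxr : ∀ x : W, x ∉ T'.verts → x ≠ r := fun x h he => h (he ▸ hr)
  have hT'L₁ : ∀ x ∈ L₁, x ∉ T'.verts := fun x h => (hL₁ x h).1
  have hT'L₂ : ∀ x ∈ L₂, x ∉ T'.verts := fun x h => (hL₂ x h).1
  have hL₁L₂ : ∀ x ∈ L₁, x ∉ L₂ := fun x h1 h2 => (hL₂ x h2).2.1 h1
  -- parents are never in L₁
  have hprL₁ : ∀ x : W, x ≠ r → pr x ∉ L₁ := by
    intro x hx hL
    by_cases hpr : pr x = r
    · exact (hL₁ _ hL).1 (hpr ▸ hr)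
    · have h1 : T.Adj (pr x) x := (hadjpr x hx).symm
      have h2 : T.Adj (pr x) (pr (pr x)) := hadjpr (pr x) hpr
      have hne : x ≠ pr (pr x) := by
        have e1 := hrkpr x hx
        have e2 := hrkpr (pr x) hpr
        intro he; rw [← he] at e2; omega
      exact hne ((hL₁ _ hL).2 h1 h2)
  -- children of a vertex outside T' are outside T'
  have hchildT' : ∀ x y : W, x ∉ T'.verts → T.Adj x y → y ≠ pr x → y ∉ T'.verts := by
    intro x y hx hadj hy hyT'
    obtain ⟨hyr, hpy, _⟩ := hchild x y (hxr x hx) hadj hy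
    exact hx (hpy ▸ hprT' y hyT' hyr)
  -- parents of non-L₁ vertices are in M
  have hprM : ∀ x : W, x ≠ r → x ∉ L₁ → pr x ∉ L₁ ∧ pr x ∉ L₂ := by
    intro x hx hx1
    refine ⟨hprL₁ x hx, ?_⟩
    intro hL
    by_cases hpr : pr x = r
    · exact (hL₂ _ hL).1 (hpr ▸ hr)
    · have h1 : T.Adj (pr x) x := (hadjpr x hx).symm
      have h2 : T.Adj (pr x) (pr (pr x)) := hadjpr (pr x) hpr
      have h3 : pr (pr x) ∉ L₁ := hprL₁ (pr x) hpr
      have hne : x ≠ pr (pr x) := by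
        have e1 := hrkpr x hx
        have e2 := hrkpr (pr x) hpr
        intro he; rw [← he] at e2; omega
      exact hne ((hL₂ _ hL).2.2 ⟨hx1, h1⟩ ⟨h3, h2⟩)
  -- key decreases towards the parent
  have hkey_lt : ∀ x : W, x ∉ T'.verts → pr x ∉ T'.verts → key (pr x) < key x := by
    intro x hxT' hpT'
    have hx := hxr x hxT'
    have hrk1 := hrkpr x hx
    have hrkm1 := hrkm x
    have hrkm2 := hrkm (pr x)
    by_cases h1 : x ∈ L₁
    · have e1 : Stmt8Aux.stg L₁ L₂ x = 2 := Stmt8Aux.stg_of_L₁ h1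
      have e2 : Stmt8Aux.stg L₁ L₂ (pr x) ≤ 1 := by
        have := hprL₁ x hx
        by_cases h2 : pr x ∈ L₂
        · rw [Stmt8Aux.stg_of_L₂ this h2]
        · rw [Stmt8Aux.stg_of_M this h2]; omega
      simp only [hkeydef, e1]
      have : Stmt8Aux.stg L₁ L₂ (pr x) * m ≤ 1 * m := Nat.mul_le_mul_right m e2
      omega
    · by_cases h2 : x ∈ L₂
      · have e1 : Stmt8Aux.stg L₁ L₂ x = 1 := Stmt8Aux.stg_of_L₂ h1 h2
        obtain ⟨e2, e3⟩ := hprM x hx h1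
        have e4 : Stmt8Aux.stg L₁ L₂ (pr x) = 0 := Stmt8Aux.stg_of_M e2 e3
        simp only [hkeydef, e1, e4]
        omega
      · have e1 : Stmt8Aux.stg L₁ L₂ x = 0 := Stmt8Aux.stg_of_M h1 h2
        obtain ⟨e2, e3⟩ := hprM x hx h1
        have e4 : Stmt8Aux.stg L₁ L₂ (pr x) = 0 := Stmt8Aux.stg_of_M e2 e3
        simp only [hkeydef, e1, e4]
        omega
  -- key increases towards children
  have hkey_gt : ∀ x y : W, x ∉ T'.verts → T.Adj x y → y ≠ pr x → key x < key y := by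
    intro x y hxT' hadj hy
    have hx := hxr x hxT'
    obtain ⟨hyr, hpy, hrky⟩ := hchild x y hx hadj hy
    have hrkm1 := hrkm x
    have hrkm2 := hrkm y
    by_cases h1 : x ∈ L₁
    · exfalso
      have h2 : T.Adj x (pr x) := hadjpr x hx
      exact hy ((hL₁ x h1).2 hadj h2)
    · by_cases h2 : x ∈ L₂
      · have hyL₁ : y ∈ L₁ := by
          by_contra hyL₁
          have h3 : pr x ∉ L₁ := hprL₁ x hx
          have h4 : T.Adj x (pr x) := hadjpr x hx
          exact hy ((hL₂ x h2).2.2 ⟨hyL₁, hadj⟩ ⟨h3, h4⟩)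
        have e1 : Stmt8Aux.stg L₁ L₂ x = 1 := Stmt8Aux.stg_of_L₂ h1 h2
        have e2 : Stmt8Aux.stg L₁ L₂ y = 2 := Stmt8Aux.stg_of_L₁ hyL₁
        simp only [hkeydef, e1, e2]
        omega
      · have e1 : Stmt8Aux.stg L₁ L₂ x = 0 := Stmt8Aux.stg_of_M h1 h2
        simp only [hkeydef, e1]
        omega
  -- lower bounds for keys by stage
  have hkeyL₁ : ∀ a ∈ L₁, 2 * m ≤ key a := by
    intro a haL₁
    simp only [hkeydef, Stmt8Aux.stg_of_L₁ haL₁]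
    omega
  have hkeyL₂ : ∀ a, a ∉ L₁ → a ∈ L₂ → m ≤ key a := by
    intro a h1 h2
    simp only [hkeydef, Stmt8Aux.stg_of_L₂ h1 h2]
    omega
  have hkeyL₁' : ∀ a ∈ L₁, key a = 2 * m + rk a := by
    intro a haL₁; simp only [hkeydef, Stmt8Aux.stg_of_L₁ haL₁]
  have hkeyL₂' : ∀ a, a ∉ L₁ → a ∈ L₂ → key a = m + rk a := by
    intro a h1 h2; simp only [hkeydef, Stmt8Aux.stg_of_L₂ h1 h2]; ring
  have hkeyM' : ∀ a, a ∉ L₁ → a ∉ L₂ → key a = rk a := by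
    intro a h1 h2; simp only [hkeydef, Stmt8Aux.stg_of_M h1 h2]; ring
  
  -- the greedy extension
  have main : ∀ n : ℕ, ∀ S : Finset W, ∀ f : W → V, Sᶜ.card ≤ n →
      (∀ a, a ∈ T'.verts → a ∈ S) →
      (∀ a (h : a ∈ T'.verts), f a = (φ ⟨a, h⟩ : V)) →
      Set.InjOn f ↑S →
      (∀ a ∈ S, ∀ b ∈ S, T.Adj a b → G.Adj (f a) (f b)) →
      (∀ a ∈ S, a ∉ T'.verts →
        f a ∉ H'.verts ∧ (a ∉ L₁ → f a ∉ X₁) ∧ (a ∉ L₁ → a ∉ L₂ → f a ∈ X₃)) →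
      (∀ a ∈ S, a ∉ T'.verts → ∀ y, y ∉ S → key a ≤ key y) →
      ∃ g : W → V, Function.Injective g ∧ (∀ a b, T.Adj a b → G.Adj (g a) (g b)) ∧
        (∀ a (h : a ∈ T'.verts), g a = (φ ⟨a, h⟩ : V)) := by
    intro n
    induction n with
    | zero =>
      intro S f hcard hC1 hC2 hC3 hC4 hC5 hC6
      have hall : ∀ w : W, w ∈ S := by
        intro w
        by_contra hw
        have h1 : w ∈ Sᶜ := Finset.mem_compl.mpr hw
        have := Finset.card_pos.mpr ⟨w, h1⟩
        omega
      exact ⟨f, fun a b hab => hC3 (Finset.mem_coe.mpr (hall a)) (Finset.mem_coe.mpr (hall b)) hab,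
        fun a b hab => hC4 a (hall a) b (hall b) hab, hC2⟩
    | succ n ih =>
      intro S f hcard hC1 hC2 hC3 hC4 hC5 hC6
      rcases Finset.eq_empty_or_nonempty Sᶜ with hSc | hSc
      · have hall : ∀ w : W, w ∈ S := by
          intro w; by_contra hw
          exact Finset.notMem_empty w (hSc ▸ Finset.mem_compl.mpr hw)
        exact ⟨f, fun a b hab => hC3 (Finset.mem_coe.mpr (hall a)) (Finset.mem_coe.mpr (hall b)) hab,
          fun a b hab => hC4 a (hall a) b (hall b) hab, hC2⟩
      · obtain ⟨x, hxc, hxmin⟩ := Sᶜ.exists_min_image key hSc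
        have hxS : x ∉ S := Finset.mem_compl.mp hxc
        have hxT' : x ∉ T'.verts := fun h => hxS (hC1 x h)
        have hxr' : x ≠ r := hxr x hxT'
        have hpadj : T.Adj x (pr x) := hadjpr x hxr'
        have hpS : pr x ∈ S := by
          by_cases hpT' : pr x ∈ T'.verts
          · exact hC1 _ hpT'
          · by_contra hp
            have h1 := hxmin (pr x) (Finset.mem_compl.mpr hp)
            have h2 := hkey_lt x hxT' hpT'
            omega
        have hnbr : ∀ a ∈ S, T.Adj x a → a = pr x := by
          intro a haS hadj
          by_contra hne
          have haT' : a ∉ T'.verts := hchildT' x a hxT' hadj hne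
          have h1 := hC6 a haS haT' x hxS
          have h2 := hkey_gt x a hxT' hadj hne
          omega
        have hH'img : H'.verts ⊆ f '' ↑S := by
          intro v hv
          refine ⟨(φ.symm ⟨v, hv⟩ : T'.verts), Finset.mem_coe.mpr (hC1 _ (φ.symm ⟨v, hv⟩).2), ?_⟩
          rw [hC2 _ (φ.symm ⟨v, hv⟩).2, Subtype.coe_eta, RelIso.apply_symm_apply]
        have hfp4 : pr x ∈ T'.verts → f (pr x) ∈ X₄ := by
          intro h
          rw [hC2 _ h, hX₄]
          exact ⟨⟨pr x, h⟩, fun hsub => hxT' (hsub hpadj.symm), rfl⟩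
        obtain ⟨B, hBnb, hBcard, hBplace⟩ :
            ∃ B : Set V, (∀ v ∈ B, G.Adj (f (pr x)) v) ∧ S.card ≤ B.ncard ∧
              (∀ v ∈ B, (x ∉ L₁ → v ∉ X₁) ∧ (x ∉ L₁ → x ∉ L₂ → v ∉ X₂)) := by
          by_cases hx1 : x ∈ L₁
          · refine ⟨G.neighborSet (f (pr x)), fun v hv => hv, ?_, ?_⟩
            · have hfp : f (pr x) ∈ X₂ ∪ X₃ ∪ X₄ := by
                by_cases hpT' : pr x ∈ T'.verts
                · exact Set.mem_union_right _ (hfp4 hpT')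
                · obtain ⟨hH, hX1, _⟩ := hC5 _ hpS hpT'
                  have h1 : f (pr x) ∈ X₁ ∪ X₂ ∪ X₃ := by
                    rw [hXunion]; exact hH
                  rcases h1 with (h1 | h1) | h1
                  · exact absurd h1 (hX1 (hprL₁ x hxr'))
                  · exact Set.mem_union_left _ (Set.mem_union_left _ h1)
                  · exact Set.mem_union_left _ (Set.mem_union_right _ h1)
              have hdeg := ha _ hfp
              have hncard : (G.neighborSet (f (pr x))).ncard = G.degree (f (pr x)) := by
                rw [Set.ncard_eq_toFinset_card']
                rfl
              have hcardS : S.card + 1 ≤ m := by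
                have h1 := Finset.card_insert_of_notMem hxS
                have h2 := Finset.card_le_univ (insert x S)
                rw [h1, hm] at h2
                omega
              omega
            · exact fun v hv => ⟨fun h => absurd hx1 h, fun h _ => absurd hx1 h⟩
          · by_cases hx2 : x ∈ L₂
            · have hfp : f (pr x) ∈ X₃ ∪ X₄ := by
                by_cases hpT' : pr x ∈ T'.verts
                · exact Set.mem_union_right _ (hfp4 hpT')
                · obtain ⟨hpl1, hpl2⟩ := hprM x hxr' hx1
                  exact Set.mem_union_left _ ((hC5 _ hpS hpT').2.2 hpl1 hpl2)
              refine ⟨G.neighborSet (f (pr x)) \ X₁, fun v hv => hv.1, ?_,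
                fun v hv => ⟨fun _ => hv.2, fun _ h2 => absurd hx2 h2⟩⟩
              have hB := hb₁ _ hfp
              have hsub : (↑(insert x S) : Set W) ⊆ L₁ᶜ := by
                intro a haa
                simp only [Finset.coe_insert, Set.mem_insert_iff, Finset.mem_coe] at haa
                intro haL₁
                rcases haa with rfl | haS
                · exact hx1 haL₁
                · by_cases haT' : a ∈ T'.verts
                  · exact hT'L₁ a haL₁ haT'
                  · have h1 := hC6 a haS haT' x hxS
                    have h2 := hkeyL₁' a haL₁
                    have h3 := hkeyL₂' x hx1 hx2
                    have h4 := hrkm x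
                    omega
              have h1 : (↑(insert x S) : Set W).ncard = S.card + 1 := by
                rw [Set.ncard_coe_finset, Finset.card_insert_of_notMem hxS]
              have h2 : (↑(insert x S) : Set W).ncard ≤ (L₁ᶜ).ncard :=
                Set.ncard_le_ncard hsub (Set.toFinite _)
              have h3 : L₁.ncard + (L₁ᶜ).ncard = m := by
                rw [Set.ncard_add_ncard_compl, Nat.card_eq_fintype_card, hm]
              omega
            · have hfp : f (pr x) ∈ X₃ ∪ X₄ := by
                by_cases hpT' : pr x ∈ T'.verts
                · exact Set.mem_union_right _ (hfp4 hpT')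
                · obtain ⟨hpl1, hpl2⟩ := hprM x hxr' hx1
                  exact Set.mem_union_left _ ((hC5 _ hpS hpT').2.2 hpl1 hpl2)
              refine ⟨G.neighborSet (f (pr x)) \ (X₁ ∪ X₂), fun v hv => hv.1, ?_,
                fun v hv => ⟨fun _ h => hv.2 (Set.mem_union_left _ h),
                  fun _ _ h => hv.2 (Set.mem_union_right _ h)⟩⟩
              have hB := hb₂ _ hfp
              have hsub : (↑(insert x S) : Set W) ⊆ (L₁ ∪ L₂)ᶜ := by
                intro a haa
                simp only [Finset.coe_insert, Set.mem_insert_iff, Finset.mem_coe] at haa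
                intro haL
                rcases haa with rfl | haS
                · rcases haL with h | h
                  · exact hx1 h
                  · exact hx2 h
                · by_cases haT' : a ∈ T'.verts
                  · rcases haL with h | h
                    · exact hT'L₁ a h haT'
                    · exact hT'L₂ a h haT'
                  · have h1 := hC6 a haS haT' x hxS
                    have h3 := hkeyM' x hx1 hx2
                    have h4 := hrkm x
                    rcases haL with h | h
                    · have h2 := hkeyL₁' a h
                      omega
                    · by_cases h5 : a ∈ L₁
                      · have h2 := hkeyL₁' a h5
                        omega
                      · have h2 := hkeyL₂' a h5 h
                        omega
              have h1 : (↑(insert x S) : Set W).ncard = S.card + 1 := by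
                rw [Set.ncard_coe_finset, Finset.card_insert_of_notMem hxS]
              have h2 : (↑(insert x S) : Set W).ncard ≤ ((L₁ ∪ L₂)ᶜ).ncard :=
                Set.ncard_le_ncard hsub (Set.toFinite _)
              have h3 : (L₁ ∪ L₂).ncard + ((L₁ ∪ L₂)ᶜ).ncard = m := by
                rw [Set.ncard_add_ncard_compl, Nat.card_eq_fintype_card, hm]
              have h4 : (L₁ ∪ L₂).ncard = L₁.ncard + L₂.ncard :=
                Set.ncard_union_eq (Set.disjoint_left.mpr hL₁L₂) (Set.toFinite _) (Set.toFinite _)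
              omega
        have hScard1 : 1 ≤ S.card := Finset.card_pos.mpr ⟨r, hC1 r hr⟩
        have himg : (f '' ↑S).ncard = S.card := by
          rw [Set.ncard_image_of_injOn hC3, Set.ncard_coe_finset]
        have hfpB : f (pr x) ∉ B := fun h => (hBnb _ h).ne rfl
        have hfpS : f (pr x) ∈ f '' ↑S := ⟨pr x, Finset.mem_coe.mpr hpS, rfl⟩
        have hBsub : B ⊆ (B \ f '' ↑S) ∪ ((f '' ↑S) \ {f (pr x)}) := by
          intro v hv
          by_cases hvS : v ∈ f '' ↑S
          · exact Set.mem_union_right _ ⟨hvS, fun he => hfpB (Set.mem_singleton_iff.mp he ▸ hv)⟩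
          · exact Set.mem_union_left _ ⟨hv, hvS⟩
        have hc1 : B.ncard ≤ (B \ f '' ↑S).ncard + ((f '' ↑S) \ {f (pr x)}).ncard :=
          le_trans (Set.ncard_le_ncard hBsub (Set.toFinite _)) (Set.ncard_union_le _ _)
        have hc2 : ((f '' ↑S) \ {f (pr x)}).ncard = S.card - 1 := by
          rw [Set.ncard_diff_singleton_of_mem hfpS, himg]
        have hBne : (B \ f '' ↑S).Nonempty := by
          apply Set.nonempty_of_ncard_ne_zero
          omega
        obtain ⟨v, hvB, hvfS⟩ := hBne
        set g : W → V := Function.update f x v with hgdef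
        have hgx : g x = v := Function.update_self x v f
        have hgy : ∀ y : W, y ≠ x → g y = f y := fun y hy => Function.update_of_ne hy v f
        apply ih (insert x S) g
        · have h1 : (insert x S)ᶜ = Sᶜ.erase x := Finset.compl_insert
          rw [h1, Finset.card_erase_of_mem hxc]
          omega
        · exact fun a h => Finset.mem_insert_of_mem (hC1 a h)
        · intro a h
          rw [hgy a (fun he => hxT' (he ▸ h))]
          exact hC2 a h
        · intro a ha b hb hab
          simp only [Finset.coe_insert, Set.mem_insert_iff, Finset.mem_coe] at ha hb
          rcases ha with rfl | ha <;> rcases hb with rfl | hb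
          · rfl
          · exfalso; apply hvfS
            rw [← hgx, hab, hgy b (fun he => hxS (he ▸ hb))]
            exact ⟨b, Finset.mem_coe.mpr hb, rfl⟩
          · exfalso; apply hvfS
            rw [← hgx, ← hab, hgy a (fun he => hxS (he ▸ ha))]
            exact ⟨a, Finset.mem_coe.mpr ha, rfl⟩
          · rw [hgy a (fun he => hxS (he ▸ ha)), hgy b (fun he => hxS (he ▸ hb))] at hab
            exact hC3 (Finset.mem_coe.mpr ha) (Finset.mem_coe.mpr hb) hab
        · intro a ha b hb hadj
          rcases Finset.mem_insert.mp ha with rfl | ha'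
          · rcases Finset.mem_insert.mp hb with rfl | hb'
            · exact absurd hadj (T.loopless.irrefl _)
            · have hbp : b = pr a := hnbr b hb' hadj
              rw [hgx, hgy b (fun he => hxS (he ▸ hb')), hbp]
              exact (hBnb v hvB).symm
          · rcases Finset.mem_insert.mp hb with rfl | hb'
            · have hap : a = pr b := hnbr a ha' hadj.symm
              rw [hgx, hgy a (fun he => hxS (he ▸ ha')), hap]
              exact hBnb v hvB
            · rw [hgy a (fun he => hxS (he ▸ ha')), hgy b (fun he => hxS (he ▸ hb'))]
              exact hC4 a ha' b hb' hadj
        · intro a ha haT'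
          rcases Finset.mem_insert.mp ha with rfl | ha'
          · rw [hgx]
            have hvH' : v ∉ H'.verts := fun h => hvfS (hH'img h)
            refine ⟨hvH', fun h1 => (hBplace v hvB).1 h1, fun h1 h2 => ?_⟩
            have h3 : v ∈ X₁ ∪ X₂ ∪ X₃ := by rw [hXunion]; exact hvH'
            rcases h3 with (h3 | h3) | h3
            · exact absurd h3 ((hBplace v hvB).1 h1)
            · exact absurd h3 ((hBplace v hvB).2 h1 h2)
            · exact h3
          · rw [hgy a (fun he => hxS (he ▸ ha'))]
            exact hC5 a ha' haT'
        · intro a ha haT' y hy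
          have hyS : y ∉ S := fun h => hy (Finset.mem_insert_of_mem h)
          rcases Finset.mem_insert.mp ha with rfl | ha'
          · exact hxmin y (Finset.mem_compl.mpr hyS)
          · exact hC6 a ha' haT' y hyS
  -- initial data
  set S₀ : Finset W := Finset.univ.filter (fun a => a ∈ T'.verts) with hS₀def
  have hS₀mem : ∀ a : W, a ∈ S₀ ↔ a ∈ T'.verts := by
    intro a; simp [hS₀def]
  set f₀ : W → V := fun a => if h : a ∈ T'.verts then (φ ⟨a, h⟩ : V) else (φ ⟨r, hr⟩ : V)
    with hf₀def
  have hf₀ : ∀ a (h : a ∈ T'.verts), f₀ a = (φ ⟨a, h⟩ : V) := by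
    intro a h; simp only [hf₀def, dif_pos h]
  have hinj₀ : Set.InjOn f₀ ↑S₀ := by
    intro a ha b hb hab
    have ha' : a ∈ T'.verts := (hS₀mem a).mp (Finset.mem_coe.mp ha)
    have hb' : b ∈ T'.verts := (hS₀mem b).mp (Finset.mem_coe.mp hb)
    rw [hf₀ a ha', hf₀ b hb'] at hab
    have h1 := φ.toEquiv.injective (Subtype.ext hab)
    exact congrArg Subtype.val h1
  have hedge₀ : ∀ a ∈ S₀, ∀ b ∈ S₀, T.Adj a b → G.Adj (f₀ a) (f₀ b) := by
    intro a ha b hb hadj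
    have ha' := (hS₀mem a).mp ha
    have hb' := (hS₀mem b).mp hb
    rw [hf₀ a ha', hf₀ b hb']
    have h1 : T'.Adj a b := hadjT' a b ha' hb' hadj
    have h2 : T'.coe.Adj ⟨a, ha'⟩ ⟨b, hb'⟩ := h1
    have h3 : H'.coe.Adj (φ ⟨a, ha'⟩) (φ ⟨b, hb'⟩) := φ.map_rel_iff.mpr h2
    exact H'.coe_adj_sub _ _ h3
  obtain ⟨g, hginj, hgedge, hgφ⟩ := main S₀ᶜ.card S₀ f₀ le_rfl
    (fun a h => (hS₀mem a).mpr h) hf₀ hinj₀ hedge₀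
    (fun a haS haT' => absurd ((hS₀mem a).mp haS) haT')
    (fun a haS haT' => absurd ((hS₀mem a).mp haS) haT')
  refine ⟨⟨Set.range g, fun u w => ∃ a b, T.Adj a b ∧ g a = u ∧ g b = w, ?_, ?_, ?_⟩, ?_, ?_⟩
  · rintro u w ⟨a, b, hab, rfl, rfl⟩
    exact hgedge a b hab
  · rintro u w ⟨a, b, hab, rfl, rfl⟩
    exact ⟨a, rfl⟩
  · constructor; rintro u w ⟨a, b, hab, h1, h2⟩
    exact ⟨b, a, hab.symm, h2, h1⟩
  · constructor
    · intro u hu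
      exact ⟨(φ.symm ⟨u, hu⟩ : T'.verts), by
        rw [hgφ _ (φ.symm ⟨u, hu⟩).2, Subtype.coe_eta, RelIso.apply_symm_apply]⟩
    · intro u w huw
      have hu : u ∈ H'.verts := H'.edge_vert huw
      have hw : w ∈ H'.verts := H'.edge_vert huw.symm
      have hcoe : H'.coe.Adj ⟨u, hu⟩ ⟨w, hw⟩ := huw
      have h2 : T'.coe.Adj (φ.symm ⟨u, hu⟩) (φ.symm ⟨w, hw⟩) := φ.symm.map_rel_iff.mpr hcoe
      have h3 : T.Adj ↑(φ.symm ⟨u, hu⟩) ↑(φ.symm ⟨w, hw⟩) := T'.coe_adj_sub _ _ h2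
      refine ⟨_, _, h3, ?_, ?_⟩
      · rw [hgφ _ (φ.symm ⟨u, hu⟩).2, Subtype.coe_eta, RelIso.apply_symm_apply]
      · rw [hgφ _ (φ.symm ⟨w, hw⟩).2, Subtype.coe_eta, RelIso.apply_symm_apply]
  · refine ⟨⟨(Equiv.ofInjective g hginj).symm, ?_⟩⟩
    intro a b
    constructor
    · intro h
      exact ⟨(Equiv.ofInjective g hginj).symm a, (Equiv.ofInjective g hginj).symm b, h,
        Equiv.apply_ofInjective_symm hginj a, Equiv.apply_ofInjective_symm hginj b⟩
    · rintro ⟨c, d, hcd, hc, hd⟩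
      have hc' : c = (Equiv.ofInjective g hginj).symm a := by
        apply hginj
        rw [hc, Equiv.apply_ofInjective_symm hginj a]
      have hd' : d = (Equiv.ofInjective g hginj).symm b := by
        apply hginj
        rw [hd, Equiv.apply_ofInjective_symm hginj b]
      rw [hc', hd'] at hcd
      exact hcd
end
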